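/- Let x ∈ ℝ^N be a block vector with weights ω_i ≥ 1 and let s > ‖ω‖_∞² denote a weighted sparsity level. Then for q < p ≤ 2 and any norm r on the blocks, the weighted block Stechkin bound holds: σ_s(x)_{r,p}^{(ω)} ≤ σ̃_s(x)_{r,p}^{(ω)} ≤ (s − ‖ω‖_∞²)^{1/p − 1/q} ‖x‖_{r,q}^{(ω)}. -/

import Mathlib

open Finset

theorem stmt1 {B : ℕ} {E : Fin B → Type*} [∀ b, NormedAddCommGroup (E b)]
    [∀ b, DecidableEq (E b)]
    (x : ∀ b, E b) (ω : Fin B → ℝ) (hω : ∀ b, 1 ≤ ω b)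
    (p q s W : ℝ) (h0q : 0 < q) (hqp : q < p) (hp2 : p ≤ 2)
    (hW : IsGreatest (Set.range ω) W)      -- `W = ‖ω‖_∞`
    (hs : W ^ 2 < s)
    -- `S` is the block support of the quasi-best weighted `s`-block approximation of `x`,
    -- chosen greedily from the non-increasing rearrangement of `‖x[b]‖/ω_b`
    -- subject to `ω(S) ≤ s`:
    (S : Finset (Fin B))
    (hS1 : ∀ b ∈ S, ∀ b' ∉ S, ‖x b'‖ / ω b' ≤ ‖x b‖ / ω b)
    (hS2 : (∑ b ∈ S, ω b ^ 2) ≤ s)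
    (hS3 : ∀ b' ∉ S, (∀ b'' ∉ S, ‖x b''‖ / ω b'' ≤ ‖x b'‖ / ω b') →
      s < (∑ b ∈ S, ω b ^ 2) + ω b' ^ 2) :
    -- σ_s(x)_{r,p}^{(ω)} ≤ σ̃_s(x)_{r,p}^{(ω)} ≤ (s − ‖ω‖_∞²)^{1/p−1/q} ‖x‖_{r,q}^{(ω)}
    sInf {t : ℝ | ∃ z : ∀ b, E b,
        (∑ b ∈ Finset.univ.filter (fun b => z b ≠ 0), ω b ^ 2) ≤ s ∧
        t = (∑ b, ω b ^ (2 - p) * ‖x b - z b‖ ^ p) ^ (1 / p)} ≤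
      (∑ b ∈ Sᶜ, ω b ^ (2 - p) * ‖x b‖ ^ p) ^ (1 / p) ∧
    (∑ b ∈ Sᶜ, ω b ^ (2 - p) * ‖x b‖ ^ p) ^ (1 / p) ≤
      (s - W ^ 2) ^ (1 / p - 1 / q) * (∑ b, ω b ^ (2 - q) * ‖x b‖ ^ q) ^ (1 / q) := by
  classical
  have hp0 : 0 < p := h0q.trans hqp
  have hωpos : ∀ b, 0 < ω b := fun b => lt_of_lt_of_le one_pos (hω b)
  have hc : 0 < s - W ^ 2 := by linarith
  have hterm : ∀ (t : ℝ) (b : Fin B),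
      ω b ^ (2 - t) * ‖x b‖ ^ t = ω b ^ 2 * (‖x b‖ / ω b) ^ t := by
    intro t b
    rw [Real.div_rpow (norm_nonneg _) (hωpos b).le,
      Real.rpow_sub (hωpos b)]
    have h2 : (ω b : ℝ) ^ (2 : ℝ) = ω b ^ 2 := by
      rw [show (2 : ℝ) = ((2 : ℕ) : ℝ) by norm_num, Real.rpow_natCast]
    rw [h2]
    field_simp
  have htermnn : ∀ (t : ℝ) (b : Fin B), 0 ≤ ω b ^ (2 - t) * ‖x b‖ ^ t := fun t b =>
    mul_nonneg (Real.rpow_nonneg (hωpos b).le _) (Real.rpow_nonneg (norm_nonneg _) _)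
  constructor
  · -- part 1 : sInf ≤ value of the quasi-best approximation
    set z : ∀ b, E b := fun b => if b ∈ S then x b else 0 with hz
    apply csInf_le
    · refine ⟨0, fun t ht => ?_⟩
      obtain ⟨z', _, rfl⟩ := ht
      exact Real.rpow_nonneg (Finset.sum_nonneg fun b _ =>
        mul_nonneg (Real.rpow_nonneg (hωpos b).le _) (Real.rpow_nonneg (norm_nonneg _) _)) _
    · refine ⟨z, ?_, ?_⟩
      · refine le_trans (Finset.sum_le_sum_of_subset_of_nonneg ?_ ?_) hS2
        · intro b hb
          simp only [Finset.mem_filter] at hb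
          by_contra h
          exact hb.2 (by simp [hz, h])
        · intro b _ _
          positivity
      · congr 1
        rw [← Finset.sum_compl_add_sum S]
        have h1 : ∀ b ∈ S, ω b ^ (2 - p) * ‖x b - z b‖ ^ p = 0 := by
          intro b hb
          simp [hz, hb, Real.zero_rpow hp0.ne']
        have h2 : ∀ b ∈ Sᶜ, ω b ^ (2 - p) * ‖x b - z b‖ ^ p
            = ω b ^ (2 - p) * ‖x b‖ ^ p := by
          intro b hb
          rw [Finset.mem_compl] at hb
          simp [hz, hb]
        rw [Finset.sum_eq_zero h1, add_zero]
        exact (Finset.sum_congr rfl h2).symm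
  · -- part 2 : weighted Stechkin bound
    by_cases hSc : Sᶜ.Nonempty
    · obtain ⟨b₀, hb₀, hmax⟩ := Sᶜ.exists_max_image (fun b => ‖x b‖ / ω b) hSc
      set α := ‖x b₀‖ / ω b₀ with hαdef
      have hα0 : 0 ≤ α := div_nonneg (norm_nonneg _) (hωpos b₀).le
      have hb₀S : b₀ ∉ S := Finset.mem_compl.mp hb₀
      set Q := ∑ b, ω b ^ (2 - q) * ‖x b‖ ^ q with hQdef
      have hQ0 : 0 ≤ Q := Finset.sum_nonneg fun b _ => htermnn q b
      set A := ∑ b ∈ Sᶜ, ω b ^ (2 - p) * ‖x b‖ ^ p with hAdef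
      have hA0 : 0 ≤ A := Finset.sum_nonneg fun b _ => htermnn p b
      have hsum : s - W ^ 2 < ∑ b ∈ S, ω b ^ 2 := by
        have h3 := hS3 b₀ hb₀S (fun b'' hb'' => hmax b'' (Finset.mem_compl.mpr hb''))
        have hωW : ω b₀ ≤ W := hW.2 ⟨b₀, rfl⟩
        nlinarith [hωpos b₀]
      -- key1 : α^q * (s - W²) ≤ Q
      have key1 : α ^ q * (s - W ^ 2) ≤ Q := by
        have h1 : α ^ q * (s - W ^ 2) ≤ α ^ q * ∑ b ∈ S, ω b ^ 2 :=
          mul_le_mul_of_nonneg_left hsum.le (Real.rpow_nonneg hα0 _)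
        have h2 : α ^ q * ∑ b ∈ S, ω b ^ 2 ≤ ∑ b ∈ S, ω b ^ (2 - q) * ‖x b‖ ^ q := by
          rw [Finset.mul_sum]
          refine Finset.sum_le_sum fun b hb => ?_
          rw [hterm q b, mul_comm (α ^ q)]
          refine mul_le_mul_of_nonneg_left ?_ (by positivity)
          exact Real.rpow_le_rpow hα0 (hS1 b hb b₀ hb₀S) h0q.le
        have h3 : ∑ b ∈ S, ω b ^ (2 - q) * ‖x b‖ ^ q ≤ Q :=
          Finset.sum_le_sum_of_subset_of_nonneg (Finset.subset_univ S)
            (fun b _ _ => htermnn q b)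
        linarith
      -- key2 : A ≤ α^(p-q) * Q
      have key2 : A ≤ α ^ (p - q) * Q := by
        have h1 : A ≤ α ^ (p - q) * ∑ b ∈ Sᶜ, ω b ^ (2 - q) * ‖x b‖ ^ q := by
          rw [Finset.mul_sum]
          refine Finset.sum_le_sum fun b hb => ?_
          rw [hterm p b, hterm q b]
          have hbase : (0 : ℝ) ≤ ‖x b‖ / ω b := div_nonneg (norm_nonneg _) (hωpos b).le
          have hsplit : (‖x b‖ / ω b) ^ p = (‖x b‖ / ω b) ^ q * (‖x b‖ / ω b) ^ (p - q) := by
            rw [← Real.rpow_add' hbase (by rw [add_sub_cancel]; exact hp0.ne'),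
              add_sub_cancel]
          rw [hsplit]
          have hle : (‖x b‖ / ω b) ^ (p - q) ≤ α ^ (p - q) :=
            Real.rpow_le_rpow hbase (hmax b hb) (by linarith)
          calc ω b ^ 2 * ((‖x b‖ / ω b) ^ q * (‖x b‖ / ω b) ^ (p - q))
              ≤ ω b ^ 2 * ((‖x b‖ / ω b) ^ q * α ^ (p - q)) := by
                refine mul_le_mul_of_nonneg_left
                  (mul_le_mul_of_nonneg_left hle (Real.rpow_nonneg hbase _)) (by positivity)
            _ = α ^ (p - q) * (ω b ^ 2 * (‖x b‖ / ω b) ^ q) := by ring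
        have h2 : ∑ b ∈ Sᶜ, ω b ^ (2 - q) * ‖x b‖ ^ q ≤ Q :=
          Finset.sum_le_sum_of_subset_of_nonneg (Finset.subset_univ Sᶜ)
            (fun b _ _ => htermnn q b)
        calc A ≤ α ^ (p - q) * ∑ b ∈ Sᶜ, ω b ^ (2 - q) * ‖x b‖ ^ q := h1
          _ ≤ α ^ (p - q) * Q :=
            mul_le_mul_of_nonneg_left h2 (Real.rpow_nonneg hα0 _)
      -- combine
      have hαq : α ^ q ≤ Q / (s - W ^ 2) := (le_div_iff₀ hc).mpr key1
      have hαpq : α ^ (p - q) ≤ (Q / (s - W ^ 2)) ^ ((p - q) / q) := by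
        have h1 : (α ^ q) ^ ((p - q) / q) ≤ (Q / (s - W ^ 2)) ^ ((p - q) / q) :=
          Real.rpow_le_rpow (Real.rpow_nonneg hα0 _) hαq
            (div_nonneg (by linarith) h0q.le)
        rwa [← Real.rpow_mul hα0, mul_div_cancel₀ _ h0q.ne'] at h1
      have hA2 : A ≤ (Q / (s - W ^ 2)) ^ ((p - q) / q) * Q := by
        calc A ≤ α ^ (p - q) * Q := key2
          _ ≤ (Q / (s - W ^ 2)) ^ ((p - q) / q) * Q :=
            mul_le_mul_of_nonneg_right hαpq hQ0
      have hRHS : ((Q / (s - W ^ 2)) ^ ((p - q) / q) * Q) ^ (1 / p)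
          = (s - W ^ 2) ^ (1 / p - 1 / q) * Q ^ (1 / q) := by
        rw [Real.div_rpow hQ0 hc.le]
        rw [div_mul_eq_mul_div]
        have hQmul : Q ^ ((p - q) / q) * Q = Q ^ (p / q) := by
          nth_rewrite 2 [show Q = Q ^ (1 : ℝ) by rw [Real.rpow_one]]
          rw [← Real.rpow_add' hQ0 (by field_simp; positivity)]
          congr 1
          field_simp
          ring
        rw [hQmul, Real.div_rpow (Real.rpow_nonneg hQ0 _) (Real.rpow_nonneg hc.le _),
          ← Real.rpow_mul hQ0, ← Real.rpow_mul hc.le]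
        rw [show p / q * (1 / p) = 1 / q by field_simp]
        rw [div_eq_mul_inv, ← Real.rpow_neg hc.le, mul_comm]
        congr 1
        field_simp
        ring
      calc A ^ (1 / p) ≤ ((Q / (s - W ^ 2)) ^ ((p - q) / q) * Q) ^ (1 / p) :=
            Real.rpow_le_rpow hA0 hA2 (by positivity)
        _ = (s - W ^ 2) ^ (1 / p - 1 / q) * Q ^ (1 / q) := hRHS
    · rw [Finset.not_nonempty_iff_eq_empty] at hSc
      rw [hSc, Finset.sum_empty, Real.zero_rpow (by positivity : (1 : ℝ) / p ≠ 0)]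
      have h1 : (0 : ℝ) < (s - W ^ 2) ^ (1 / p - 1 / q) := Real.rpow_pos_of_pos hc _
      have h2 : (0 : ℝ) ≤ (∑ b, ω b ^ (2 - q) * ‖x b‖ ^ q) ^ (1 / q) :=
        Real.rpow_nonneg (Finset.sum_nonneg fun b _ => htermnn q b) _
      positivity
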